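/- Let f(x) = x + (1/2)M(x)x be a quadratic map in standard form on ℝⁿ. If det(I + M(x)) = 1 for all x ∈ ℝⁿ, then M(x)ⁿ = 0 for all x; that is, each M(x) is nilpotent with characteristic polynomial ζⁿ. -/

import Mathlib

open Matrix Polynomial

/-- If `det(I + M(x)) = 1` for all `x`, then each `M(x)` is nilpotent: `M(x)ⁿ = 0`. -/
theorem det_one_implies_nilpotent (n : ℕ)
    (M : (Fin n → ℝ) → Matrix (Fin n) (Fin n) ℝ)
    (hlin : IsLinearMap ℝ M)
    (hsym : ∀ x y : Fin n → ℝ, M x *ᵥ y = M y *ᵥ x)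
    (hdet : ∀ x : Fin n → ℝ, (1 + M x).det = 1) :
    ∀ x : Fin n → ℝ, (M x) ^ n = 0 := by
  intro x
  set A := M x with hA
  -- evaluation of the characteristic polynomial at a scalar
  have hev : ∀ t : ℝ, (A.charpoly).eval t = (t • (1 : Matrix (Fin n) (Fin n) ℝ) - A).det := by
    intro t
    rw [Matrix.charpoly, ← coe_evalRingHom, RingHom.map_det]
    congr 1
    ext i j
    by_cases h : i = j <;>
      simp [charmatrix_apply, Matrix.sub_apply, Matrix.smul_apply, Matrix.one_apply, h]
  -- the charpoly agrees with X^n at all nonzero t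
  have key : ∀ t : ℝ, t ≠ 0 → (A.charpoly).eval t = t ^ n := by
    intro t ht
    have h1 : (1 : Matrix (Fin n) (Fin n) ℝ) + M ((-t⁻¹) • x) = 1 - t⁻¹ • A := by
      rw [hlin.map_smul]
      simp [sub_eq_add_neg, neg_smul, hA]
    have h2 : (1 - t⁻¹ • A : Matrix (Fin n) (Fin n) ℝ).det = 1 := by
      rw [← h1]; exact hdet _
    have h3 : t • (1 : Matrix (Fin n) (Fin n) ℝ) - A
        = t • ((1 : Matrix (Fin n) (Fin n) ℝ) - t⁻¹ • A) := by
      rw [smul_sub, smul_smul, mul_inv_cancel₀ ht, one_smul]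
    rw [hev, h3, det_smul, h2, mul_one, Fintype.card_fin]
  have hcp : A.charpoly = X ^ n := by
    apply Polynomial.eq_of_infinite_eval_eq
    apply Set.Infinite.mono (s := {t : ℝ | t ≠ 0})
    · intro t ht
      simp only [Set.mem_setOf_eq] at ht ⊢
      rw [key t ht, eval_pow, eval_X]
    · have : ({t : ℝ | t ≠ 0}) = ({0}ᶜ : Set ℝ) := by ext t; simp
      rw [this]
      exact (Set.finite_singleton 0).infinite_compl
  have := Matrix.aeval_self_charpoly A
  rwa [hcp, map_pow, aeval_X] at this
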